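/- arXiv:2211.12339 — 5 statements merged into one kernel-verified Lean document; each statement's English description precedes it below -/
import Mathlib

section
/- Let Cov be a symmetric positive definite n×n real matrix and fix i ∈ {1,...,n}. Then the minimum of θᵀ Cov θ over all θ ∈ ℝⁿ with θ_i = -1 equals det(Cov) / det(Cov with row i and column i removed). -/
open Matrix

private lemma inv_diag_eq {n : ℕ} (Cov : Matrix (Fin (n + 1)) (Fin (n + 1)) ℝ)
    (hCov : Cov.PosDef) (i : Fin (n + 1)) :
    Cov⁻¹ i i = (Cov.submatrix i.succAbove i.succAbove).det / Cov.det := by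
  rw [Matrix.inv_def]
  simp [Matrix.adjugate_fin_succ_eq_det_submatrix, Ring.inverse_eq_inv,
    div_eq_inv_mul, mul_comm]

/-- For a symmetric positive definite `Cov`, the minimum of `θᵀ Cov θ`
over `θ` with `θ i = -1` equals `det Cov / det (Cov with row i and column i removed)`. -/
theorem stmt_1 {n : ℕ} (Cov : Matrix (Fin (n + 1)) (Fin (n + 1)) ℝ)
    (hCov : Cov.PosDef) (i : Fin (n + 1)) :
    IsLeast {v : ℝ | ∃ θ : Fin (n + 1) → ℝ, θ i = -1 ∧ v = θ ⬝ᵥ Cov.mulVec θ}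
      (Cov.det / (Cov.submatrix i.succAbove i.succAbove).det) := by
  have hinv := hCov.inv
  set B := Cov⁻¹ with hB
  set c := B i i with hc
  have hc_pos : 0 < c := by
    have := (posDef_iff_dotProduct_mulVec.mp hinv).2 (x := Pi.single i 1) (by
      intro h
      have := congrFun h i
      simp at this)
    simpa [single_dotProduct, mulVec_single] using this
  have hc_ne : c ≠ 0 := ne_of_gt hc_pos
  have hdet_pos : 0 < Cov.det := hCov.det_pos
  have hcval : c = (Cov.submatrix i.succAbove i.succAbove).det / Cov.det :=
    inv_diag_eq Cov hCov i
  have hmin_val : Cov.det / (Cov.submatrix i.succAbove i.succAbove).det = c⁻¹ := by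
    rw [hcval]; field_simp
  -- the minimizer
  set θ₀ : Fin (n + 1) → ℝ := fun j => -(B j i) / c with hθ₀
  have hθ₀i : θ₀ i = -1 := by simp [hθ₀, ← hc, neg_div, hc_ne]
  have hCovB : Cov * B = 1 :=
    Matrix.mul_nonsing_inv Cov (isUnit_iff_ne_zero.mpr hdet_pos.ne')
  have hmul' : Cov.mulVec θ₀ = (-(c⁻¹)) • (Pi.single i 1 : Fin (n+1) → ℝ) := by
    have h1 : θ₀ = (-(c⁻¹)) • (B.mulVec (Pi.single i 1 : Fin (n+1) → ℝ)) := by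
      funext k; simp [hθ₀, mulVec_single, neg_div, div_eq_inv_mul, mul_comm]
    rw [h1, Matrix.mulVec_smul, Matrix.mulVec_mulVec, hCovB]
    funext j
    by_cases h : j = i <;> simp [Matrix.one_apply, h, Pi.single_apply]
  have hsymm : Covᵀ = Cov := by
    funext a b
    rw [Matrix.transpose_apply]
    simpa using hCov.isHermitian.apply a b
  have hval0 : θ₀ ⬝ᵥ Cov.mulVec θ₀ = c⁻¹ := by
    rw [hmul']
    simp [dotProduct_smul, dotProduct_single, hθ₀i]
  constructor
  · exact ⟨θ₀, hθ₀i, by rw [hval0, hmin_val]⟩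
  · rintro v ⟨θ, hθi, rfl⟩
    rw [hmin_val]
    set δ : Fin (n + 1) → ℝ := θ - θ₀ with hδ
    have hδi : δ i = 0 := by simp [hδ, hθi, hθ₀i]
    have hθeq : θ = θ₀ + δ := by simp [hδ]
    have hcross : δ ⬝ᵥ Cov.mulVec θ₀ = 0 := by
      rw [hmul']
      simp [dotProduct_smul, dotProduct_single, hδi]
    have hcross' : θ₀ ⬝ᵥ Cov.mulVec δ = 0 := by
      rw [Matrix.dotProduct_mulVec, ← hsymm, Matrix.vecMul_transpose, hmul']
      simp [smul_dotProduct, single_dotProduct, hδi]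
    have hδnn : 0 ≤ δ ⬝ᵥ Cov.mulVec δ := by
      simpa using hCov.posSemidef.dotProduct_mulVec_nonneg δ
    have : θ ⬝ᵥ Cov.mulVec θ = c⁻¹ + δ ⬝ᵥ Cov.mulVec δ := by
      rw [hθeq, Matrix.mulVec_add, dotProduct_add, add_dotProduct, add_dotProduct,
        hval0, hcross, hcross']
      ring
    linarith
end

section
/- Let Cov be symmetric positive definite and fix i. For all λ ≥ 0, the quadratic value θ*(λ)ᵀ Cov θ*(λ) at any minimizer θ*(λ) of θᵀ Cov θ + λ Σ_{j≠i}|θ_j| subject to θ_i = -1 satisfies det(Cov)/det(Cov_{[n]∖i}^{[n]∖i}) ≤ θ*(λ)ᵀ Cov θ*(λ) ≤ Cov_{ii}. -/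
open Matrix Finset

/-- For any minimizer `θ*` of `θᵀ Cov θ + λ ∑_{j≠i} |θ_j|` subject to
`θ i = -1` (λ ≥ 0), the quadratic value satisfies
`det Cov / det(Cov minus row/col i) ≤ θ*ᵀ Cov θ* ≤ Cov i i`. -/
theorem stmt_4 {n : ℕ} (Cov : Matrix (Fin (n + 1)) (Fin (n + 1)) ℝ) (hCov : Cov.PosDef)
    (i : Fin (n + 1)) (lam : ℝ) (hlam : 0 ≤ lam)
    (θstar : Fin (n + 1) → ℝ) (hθi : θstar i = -1)
    (hmin : ∀ θ : Fin (n + 1) → ℝ, θ i = -1 →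
      θstar ⬝ᵥ Cov.mulVec θstar + lam * ∑ j ∈ Finset.univ.erase i, |θstar j| ≤
        θ ⬝ᵥ Cov.mulVec θ + lam * ∑ j ∈ Finset.univ.erase i, |θ j|) :
    Cov.det / (Cov.submatrix i.succAbove i.succAbove).det ≤ θstar ⬝ᵥ Cov.mulVec θstar ∧
      θstar ⬝ᵥ Cov.mulVec θstar ≤ Cov i i := by
  have hdet : 0 < Cov.det := hCov.det_pos
  have hunit : IsUnit Cov.det := hdet.ne'.isUnit
  set C := Cov⁻¹ with hC
  have hCovC : ∀ x : Fin (n+1) → ℝ, Cov *ᵥ (C *ᵥ x) = x := by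
    intro x
    rw [mulVec_mulVec, Cov.mul_nonsing_inv hunit, one_mulVec]
  set u : Fin (n+1) → ℝ := C *ᵥ Pi.single i 1 with hu
  set c : ℝ := C i i with hc
  have hui : u i = c := by
    simp [hu, hc, mulVec_single]
  have hCu : Cov *ᵥ u = Pi.single i 1 := hCovC _
  have hcpos : 0 < c := by
    have h1 : (Pi.single i 1 : Fin (n+1) → ℝ) ≠ 0 := by
      intro h
      have := congrFun h i
      simp at this
    have := hCov.inv.dotProduct_mulVec_pos h1
    simpa [single_dotProduct, mulVec_single, hc] using this
  -- symmetric: Cov transpose = Cov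
  have hsym : Covᵀ = Cov := hCov.isHermitian
  -- key quadratic bound: 1/c ≤ θstar Cov θstar
  have hθCu : θstar ⬝ᵥ Cov *ᵥ u = -1 := by
    rw [hCu, dotProduct_single, hθi]; ring
  have huCθ : u ⬝ᵥ Cov *ᵥ θstar = -1 := by
    rw [dotProduct_mulVec, ← mulVec_transpose, hsym, hCu, single_dotProduct, hθi]; ring
  have huCu : u ⬝ᵥ Cov *ᵥ u = c := by
    rw [hCu, dotProduct_single, hui]; ring
  set Q : ℝ := θstar ⬝ᵥ Cov.mulVec θstar with hQ
  have hexp : 0 ≤ Q - 1 / c := by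
    have h0 : 0 ≤ (θstar + c⁻¹ • u) ⬝ᵥ Cov *ᵥ (θstar + c⁻¹ • u) := by
      rcases eq_or_ne (θstar + c⁻¹ • u) 0 with h | h
      · rw [h]; simp
      · exact le_of_lt (by simpa using hCov.dotProduct_mulVec_pos h)
    have hexpand : (θstar + c⁻¹ • u) ⬝ᵥ Cov *ᵥ (θstar + c⁻¹ • u)
        = Q + c⁻¹ * (-1) + (c⁻¹ * (-1) + c⁻¹ * (c⁻¹ * c)) := by
      rw [mulVec_add, mulVec_smul, dotProduct_add, add_dotProduct, add_dotProduct,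
        smul_dotProduct, smul_dotProduct, dotProduct_smul, dotProduct_smul,
        hθCu, huCθ, huCu]
      simp [hQ]
    rw [hexpand] at h0
    have : c⁻¹ * (c⁻¹ * c) = c⁻¹ := by field_simp
    rw [this] at h0
    have : Q + c⁻¹ * (-1) + (c⁻¹ * (-1) + c⁻¹) = Q - 1/c := by field_simp; ring
    linarith [this ▸ h0]
  -- identify c with det minor / det
  have hminor : Cov.adjugate i i = (Cov.submatrix i.succAbove i.succAbove).det := by
    rw [Matrix.adjugate_fin_succ_eq_det_submatrix]
    have : ((-1 : ℝ)) ^ ((i : ℕ) + (i : ℕ)) = 1 := by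
      rw [← two_mul, pow_mul]; norm_num
    rw [this, one_mul]
  have hcval : c = (Cov.submatrix i.succAbove i.succAbove).det / Cov.det := by
    rw [hc, hC, Matrix.inv_def]
    simp [Ring.inverse_eq_inv', hminor]
    ring
  constructor
  · have hms : (Cov.submatrix i.succAbove i.succAbove).det = c * Cov.det := by
      rw [hcval]; field_simp
    have hmpos : 0 < (Cov.submatrix i.succAbove i.succAbove).det := by
      rw [hms]; positivity
    have : Cov.det / (Cov.submatrix i.succAbove i.succAbove).det = 1 / c := by
      rw [hms]; field_simp
    rw [this]
    linarith
  · have hpen : 0 ≤ lam * ∑ j ∈ Finset.univ.erase i, |θstar j| := by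
      apply mul_nonneg hlam
      exact Finset.sum_nonneg fun j _ => abs_nonneg _
    have := hmin (Pi.single i (-1)) (by simp)
    have hval : (Pi.single i (-1) : Fin (n+1) → ℝ) ⬝ᵥ Cov *ᵥ Pi.single i (-1) = Cov i i := by
      rw [mulVec_single, single_dotProduct]; simp
    have hpen2 : ∑ j ∈ Finset.univ.erase i, |(Pi.single i (-1) : Fin (n+1) → ℝ) j| = 0 := by
      apply Finset.sum_eq_zero
      intro j hj
      rw [Pi.single_eq_of_ne (Finset.ne_of_mem_erase hj)]
      simp
    rw [hval, hpen2, mul_zero, add_zero] at this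
    linarith
end

section
/- Let Ĉov = A² where A is symmetric positive definite, b̂ ∈ ℝ^{n-1}, and for λ > 0 let θ̂*(λ) minimize θ̂ᵀ Ĉov θ̂ - 2b̂ᵀθ̂ + λ‖θ̂‖₁. Define ξ*(λ) = (√2 A⁻¹ b̂ - √2 A θ̂*(λ))/λ. Then for all λ', λ'' > 0 and each coordinate j: |(Ĉov θ̂*(λ') - b̂)_j / λ' - (Ĉov θ̂*(λ'') - b̂)_j / λ''| ≤ ‖A_j‖₂ · ‖A⁻¹ b̂‖₂ · |1/λ' - 1/λ''|, where A_j is the j-th row of A. -/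
open Matrix Finset

private lemma aux_nonneg (x c : ℝ) (hc : 0 ≤ c)
    (h : ∀ t : ℝ, 0 < t → t ≤ 1 → 0 ≤ t * x + t ^ 2 * c) : 0 ≤ x := by
  by_contra hx
  push_neg at hx
  rcases eq_or_lt_of_le hc with hc0 | hc0
  · have h1 := h 1 one_pos le_rfl
    nlinarith
  · have hd : 0 < -x / (2 * c) := div_pos (by linarith) (by linarith)
    set t := min 1 (-x / (2 * c)) with ht
    have htpos : 0 < t := lt_min one_pos hd
    have ht1 : t ≤ 1 := min_le_left _ _
    have ht2 : t * (2 * c) ≤ -x := by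
      have h3 := min_le_right 1 (-x / (2 * c))
      calc t * (2 * c) ≤ (-x / (2 * c)) * (2 * c) :=
            mul_le_mul_of_nonneg_right h3 (by positivity)
        _ = -x := by field_simp
    have h2 := h t htpos ht1
    nlinarith [mul_le_mul_of_nonneg_left ht2 htpos.le]

/-- Variational inequality for the lasso minimizer. -/
private lemma lasso_vi {m : ℕ} (A : Matrix (Fin m) (Fin m) ℝ)
    (hsym : Aᵀ = A) (b u : Fin m → ℝ) (hu : A.mulVec u = b)
    (lam : ℝ) (hlam : 0 < lam) (θ₀ : Fin m → ℝ)
    (hmin : ∀ θ : Fin m → ℝ,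
      θ₀ ⬝ᵥ (A * A).mulVec θ₀ - 2 * (b ⬝ᵥ θ₀) + lam * ∑ j, |θ₀ j| ≤
        θ ⬝ᵥ (A * A).mulVec θ - 2 * (b ⬝ᵥ θ) + lam * ∑ j, |θ j|)
    (θ : Fin m → ℝ) :
    0 ≤ 2 * ((A.mulVec θ₀ - u) ⬝ᵥ (A.mulVec θ - A.mulVec θ₀)) +
      lam * ((∑ j, |θ j|) - ∑ j, |θ₀ j|) := by
  have hsd : ∀ v w : Fin m → ℝ, v ⬝ᵥ A.mulVec w = A.mulVec v ⬝ᵥ w := by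
    intro v w
    rw [Matrix.dotProduct_mulVec, ← Matrix.mulVec_transpose, hsym]
  have hquad : ∀ θ : Fin m → ℝ, θ ⬝ᵥ (A * A).mulVec θ - 2 * (b ⬝ᵥ θ)
      = (A.mulVec θ - u) ⬝ᵥ (A.mulVec θ - u) - u ⬝ᵥ u := by
    intro φ
    have h1 : φ ⬝ᵥ (A * A).mulVec φ = A.mulVec φ ⬝ᵥ A.mulVec φ := by
      rw [← Matrix.mulVec_mulVec, hsd]
    have h2 : b ⬝ᵥ φ = u ⬝ᵥ A.mulVec φ := by rw [hsd, hu]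
    rw [h1, h2, sub_dotProduct, dotProduct_sub, dotProduct_sub,
      dotProduct_comm u (A.mulVec φ)]
    ring
  set v := A.mulVec θ₀ - u with hv
  set δ := A.mulVec θ - A.mulVec θ₀ with hδ
  apply aux_nonneg _ (δ ⬝ᵥ δ)
  · exact Finset.sum_nonneg fun i _ => mul_self_nonneg _
  intro t ht0 ht1
  have hmt := hmin (θ₀ + t • (θ - θ₀))
  rw [hquad, hquad] at hmt
  have hAt : A.mulVec (θ₀ + t • (θ - θ₀)) - u = v + t • δ := by
    rw [Matrix.mulVec_add, Matrix.mulVec_smul, Matrix.mulVec_sub, hv, hδ]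
    ext k
    simp only [Pi.add_apply, Pi.sub_apply, Pi.smul_apply, smul_eq_mul]
    ring
  rw [hAt] at hmt
  have hdot : (v + t • δ) ⬝ᵥ (v + t • δ)
      = v ⬝ᵥ v + 2 * t * (v ⬝ᵥ δ) + t ^ 2 * (δ ⬝ᵥ δ) := by
    simp only [dotProduct, Pi.add_apply, Pi.smul_apply, smul_eq_mul,
      Finset.mul_sum, ← Finset.sum_add_distrib]
    exact Finset.sum_congr rfl fun i _ => by ring
  rw [hdot] at hmt
  have hΩ : ∑ j, |(θ₀ + t • (θ - θ₀)) j|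
      ≤ (∑ j, |θ₀ j|) + t * ((∑ j, |θ j|) - ∑ j, |θ₀ j|) := by
    have hj : ∀ j : Fin m, |(θ₀ + t • (θ - θ₀)) j| ≤ |θ₀ j| + t * (|θ j| - |θ₀ j|) := by
      intro j
      have he : (θ₀ + t • (θ - θ₀)) j = (1 - t) * θ₀ j + t * θ j := by
        simp only [Pi.add_apply, Pi.smul_apply, Pi.sub_apply, smul_eq_mul]; ring
      rw [he]
      calc |(1 - t) * θ₀ j + t * θ j| ≤ |(1 - t) * θ₀ j| + |t * θ j| := abs_add_le _ _
        _ = (1 - t) * |θ₀ j| + t * |θ j| := by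
            rw [abs_mul, abs_mul, abs_of_nonneg (by linarith), abs_of_nonneg ht0.le]
        _ = |θ₀ j| + t * (|θ j| - |θ₀ j|) := by ring
    calc ∑ j, |(θ₀ + t • (θ - θ₀)) j| ≤ ∑ j, (|θ₀ j| + t * (|θ j| - |θ₀ j|)) :=
          Finset.sum_le_sum fun j _ => hj j
      _ = (∑ j, |θ₀ j|) + t * ((∑ j, |θ j|) - ∑ j, |θ₀ j|) := by
          rw [Finset.sum_add_distrib, ← Finset.mul_sum, Finset.sum_sub_distrib]
  have hΩ' := mul_le_mul_of_nonneg_left hΩ hlam.le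
  nlinarith [hmt, hΩ']

set_option maxHeartbeats 1600000 in
/-- Slope bound for the Lasso solution path (Theorem 2 of the paper).
With `Ĉov = A²` (`A` symmetric positive definite) and `θ̂*(λ)` the minimizer of
`θ̂ᵀ Ĉov θ̂ - 2b̂ᵀθ̂ + λ‖θ̂‖₁`, for every coordinate `j`,
`|(Ĉov θ̂*(λ') - b̂)_j/λ' - (Ĉov θ̂*(λ'') - b̂)_j/λ''| ≤ ‖A_j‖₂ ‖A⁻¹ b̂‖₂ |1/λ' - 1/λ''|`. -/
theorem stmt_10 {m : ℕ} (A Cov : Matrix (Fin m) (Fin m) ℝ)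
    (hA : A.PosDef) (hACov : Cov = A * A)
    (b : Fin m → ℝ) (lam' lam'' : ℝ) (hlam' : 0 < lam') (hlam'' : 0 < lam'')
    (θ₁ θ₂ : Fin m → ℝ)
    (hθ₁ : ∀ θ : Fin m → ℝ,
      θ₁ ⬝ᵥ Cov.mulVec θ₁ - 2 * (b ⬝ᵥ θ₁) + lam' * ∑ j, |θ₁ j| ≤
        θ ⬝ᵥ Cov.mulVec θ - 2 * (b ⬝ᵥ θ) + lam' * ∑ j, |θ j|)
    (hθ₂ : ∀ θ : Fin m → ℝ,
      θ₂ ⬝ᵥ Cov.mulVec θ₂ - 2 * (b ⬝ᵥ θ₂) + lam'' * ∑ j, |θ₂ j| ≤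
        θ ⬝ᵥ Cov.mulVec θ - 2 * (b ⬝ᵥ θ) + lam'' * ∑ j, |θ j|)
    (j : Fin m) :
    |(Cov.mulVec θ₁ j - b j) / lam' - (Cov.mulVec θ₂ j - b j) / lam''| ≤
      Real.sqrt (∑ k, (A j k) ^ 2) * Real.sqrt (∑ k, (A⁻¹.mulVec b k) ^ 2) *
        |1 / lam' - 1 / lam''| := by
  subst hACov
  have hdet : IsUnit A.det := hA.det_pos.ne'.isUnit
  have hsym : Aᵀ = A := by
    ext i k
    have h := congrFun (congrFun hA.1.eq i) k
    simpa using h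
  set u := A⁻¹.mulVec b with hu_def
  have hAu : A.mulVec u = b := by
    rw [hu_def, Matrix.mulVec_mulVec, Matrix.mul_nonsing_inv A hdet, Matrix.one_mulVec]
  set e1 := A.mulVec θ₁ - u with he1
  set e2 := A.mulVec θ₂ - u with he2
  -- scalar abbreviations
  set a0 := e1 ⬝ᵥ e1 with ha0
  set b0 := e1 ⬝ᵥ e2 with hb0
  set c0 := e2 ⬝ᵥ e2 with hc0
  set p0 := e1 ⬝ᵥ u with hp0
  set q0 := e2 ⬝ᵥ u with hq0
  set Ω1 := ∑ j, |θ₁ j| with hΩ1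
  set Ω2 := ∑ j, |θ₂ j| with hΩ2
  -- variational inequalities at scaled points
  have vi1 := lasso_vi A hsym b u hAu lam' hlam' θ₁ hθ₁ ((lam' / lam'') • θ₂)
  have vi2 := lasso_vi A hsym b u hAu lam'' hlam'' θ₂ hθ₂ ((lam'' / lam') • θ₁)
  have hΩs : ∀ (c : ℝ) (θ : Fin m → ℝ), 0 ≤ c → (∑ j, |(c • θ) j|) = c * ∑ j, |θ j| := by
    intro c θ hc
    simp [abs_mul, abs_of_nonneg hc, Finset.mul_sum]
  have hAe1 : A.mulVec θ₁ = e1 + u := by rw [he1]; ext k; simp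
  have hAe2 : A.mulVec θ₂ = e2 + u := by rw [he2]; ext k; simp
  -- convert vi1 to scalar form
  rw [Matrix.mulVec_smul] at vi1 vi2
  have vi1' : 0 ≤ 2 * ((lam' / lam'') * b0 + (lam' / lam'') * p0 - a0 - p0) +
      lam' * ((lam' / lam'') * Ω2 - Ω1) := by
    have hd : (A.mulVec θ₁ - u) ⬝ᵥ ((lam' / lam'') • A.mulVec θ₂ - A.mulVec θ₁)
        = (lam' / lam'') * b0 + (lam' / lam'') * p0 - a0 - p0 := by
      rw [ha0, hb0, hp0, he1, he2]
      simp only [dotProduct, Pi.sub_apply, Pi.smul_apply, smul_eq_mul,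
        Finset.mul_sum, ← Finset.sum_sub_distrib, ← Finset.sum_add_distrib]
      exact Finset.sum_congr rfl fun i _ => by ring
    rw [hd] at vi1
    rwa [hΩs (lam' / lam'') θ₂ (by positivity), ← hΩ1, ← hΩ2] at vi1
  have vi2' : 0 ≤ 2 * ((lam'' / lam') * b0 + (lam'' / lam') * q0 - c0 - q0) +
      lam'' * ((lam'' / lam') * Ω1 - Ω2) := by
    have hd : (A.mulVec θ₂ - u) ⬝ᵥ ((lam'' / lam') • A.mulVec θ₁ - A.mulVec θ₂)
        = (lam'' / lam') * b0 + (lam'' / lam') * q0 - c0 - q0 := by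
      rw [hb0, hc0, hq0, he1, he2]
      simp only [dotProduct, Pi.sub_apply, Pi.smul_apply, smul_eq_mul,
        Finset.mul_sum, ← Finset.sum_sub_distrib, ← Finset.sum_add_distrib]
      exact Finset.sum_congr rfl fun i _ => by ring
    rw [hd] at vi2
    rwa [hΩs (lam'' / lam') θ₁ (by positivity), ← hΩ1, ← hΩ2] at vi2
  -- clear denominators in the variational inequalities
  have vi1'' : 0 ≤ 2 * (lam' * b0 + lam' * p0 - lam'' * a0 - lam'' * p0) +
      lam' ^ 2 * Ω2 - lam' * lam'' * Ω1 := by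
    have h := mul_nonneg hlam''.le vi1'
    have he : lam'' * (2 * ((lam' / lam'') * b0 + (lam' / lam'') * p0 - a0 - p0) +
        lam' * ((lam' / lam'') * Ω2 - Ω1))
        = 2 * (lam' * b0 + lam' * p0 - lam'' * a0 - lam'' * p0) +
          lam' ^ 2 * Ω2 - lam' * lam'' * Ω1 := by
      field_simp
      ring
    rwa [he] at h
  have vi2'' : 0 ≤ 2 * (lam'' * b0 + lam'' * q0 - lam' * c0 - lam' * q0) +
      lam'' ^ 2 * Ω1 - lam' * lam'' * Ω2 := by
    have h := mul_nonneg hlam'.le vi2'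
    have he : lam' * (2 * ((lam'' / lam') * b0 + (lam'' / lam') * q0 - c0 - q0) +
        lam'' * ((lam'' / lam') * Ω1 - Ω2))
        = 2 * (lam'' * b0 + lam'' * q0 - lam' * c0 - lam' * q0) +
          lam'' ^ 2 * Ω1 - lam' * lam'' * Ω2 := by
      field_simp
      ring
    rwa [he] at h
  -- the firm nonexpansiveness inequality in scalar form
  set d : Fin m → ℝ := (1 / lam') • e1 - (1 / lam'') • e2 with hd_def
  have hs : d ⬝ᵥ d = (1 / lam') ^ 2 * a0 - 2 * (1 / lam') * (1 / lam'') * b0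
      + (1 / lam'') ^ 2 * c0 := by
    rw [hd_def, ha0, hb0, hc0]
    simp only [dotProduct, Pi.sub_apply, Pi.smul_apply, smul_eq_mul,
      Finset.mul_sum, ← Finset.sum_sub_distrib, ← Finset.sum_add_distrib]
    exact Finset.sum_congr rfl fun i _ => by ring
  have hr : d ⬝ᵥ ((1 / lam'' - 1 / lam') • u)
      = (1 / lam'' - 1 / lam') * ((1 / lam') * p0 - (1 / lam'') * q0) := by
    rw [hd_def, hp0, hq0]
    simp only [dotProduct, Pi.sub_apply, Pi.smul_apply, smul_eq_mul,
      Finset.mul_sum, ← Finset.sum_sub_distrib]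
    exact Finset.sum_congr rfl fun i _ => by ring
  have hkey : d ⬝ᵥ d ≤ d ⬝ᵥ ((1 / lam'' - 1 / lam') • u) := by
    have hpos : (0:ℝ) < lam' ^ 2 * lam'' ^ 2 := by positivity
    have hmul : lam' ^ 2 * lam'' ^ 2 * (d ⬝ᵥ d)
        ≤ lam' ^ 2 * lam'' ^ 2 * (d ⬝ᵥ ((1 / lam'' - 1 / lam') • u)) := by
      rw [hs, hr]
      have h1 : lam' ^ 2 * lam'' ^ 2 * ((1 / lam') ^ 2 * a0
          - 2 * (1 / lam') * (1 / lam'') * b0 + (1 / lam'') ^ 2 * c0)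
          = lam'' ^ 2 * a0 - 2 * lam' * lam'' * b0 + lam' ^ 2 * c0 := by
        field_simp
      have h2 : lam' ^ 2 * lam'' ^ 2 * ((1 / lam'' - 1 / lam') *
          ((1 / lam') * p0 - (1 / lam'') * q0))
          = (lam' - lam'') * (lam'' * p0 - lam' * q0) := by
        field_simp
      rw [h1, h2]
      linarith [mul_nonneg hlam''.le vi1'', mul_nonneg hlam'.le vi2'']
    exact le_of_mul_le_mul_left hmul hpos
  -- Cauchy-Schwarz: ‖d‖ ≤ ‖(1/λ''-1/λ')u‖
  have hdd : (0:ℝ) ≤ d ⬝ᵥ d := Finset.sum_nonneg fun i _ => mul_self_nonneg _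
  have hsum_d : ∑ k, d k ^ 2 = d ⬝ᵥ d := by
    simp [dotProduct, sq]
  have hcs2 : (d ⬝ᵥ ((1 / lam'' - 1 / lam') • u)) ^ 2
      ≤ (d ⬝ᵥ d) * ((1 / lam'' - 1 / lam') ^ 2 * ∑ k, u k ^ 2) := by
    have h := Finset.sum_mul_sq_le_sq_mul_sq Finset.univ d ((1 / lam'' - 1 / lam') • u)
    have h1 : ∑ i, d i ^ 2 = d ⬝ᵥ d := hsum_d
    have h2 : ∑ i, ((1 / lam'' - 1 / lam') • u) i ^ 2
        = (1 / lam'' - 1 / lam') ^ 2 * ∑ k, u k ^ 2 := by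
      simp only [Pi.smul_apply, smul_eq_mul, mul_pow, Finset.mul_sum]
    have h3 : (∑ i, d i * ((1 / lam'' - 1 / lam') • u) i)
        = d ⬝ᵥ ((1 / lam'' - 1 / lam') • u) := rfl
    rw [h3, h1, h2] at h
    exact h
  have hnorm : Real.sqrt (d ⬝ᵥ d)
      ≤ |1 / lam' - 1 / lam''| * Real.sqrt (∑ k, u k ^ 2) := by
    have hz : |1 / lam' - 1 / lam''| * Real.sqrt (∑ k, u k ^ 2)
        = Real.sqrt ((1 / lam'' - 1 / lam') ^ 2 * ∑ k, u k ^ 2) := by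
      rw [Real.sqrt_mul (sq_nonneg _), Real.sqrt_sq_eq_abs, abs_sub_comm]
    rw [hz]
    set S := d ⬝ᵥ d
    set T := (1 / lam'' - 1 / lam') ^ 2 * ∑ k, u k ^ 2 with hT
    have hT0 : (0:ℝ) ≤ T := by
      apply mul_nonneg (sq_nonneg _) (Finset.sum_nonneg fun i _ => sq_nonneg _)
    -- S ≤ d⬝z and (d⬝z)² ≤ S*T  ⟹ S² ≤ S*T ⟹ √S ≤ √T
    have hST : S ^ 2 ≤ S * T := by
      calc S ^ 2 ≤ (d ⬝ᵥ ((1 / lam'' - 1 / lam') • u)) ^ 2 := by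
            apply sq_le_sq' <;> nlinarith [hkey, hdd]
        _ ≤ S * T := hcs2
    have hSTle : S ≤ T := by
      rcases eq_or_lt_of_le hdd with h0 | h0
      · linarith
      · nlinarith [hST]
    exact Real.sqrt_le_sqrt hSTle
  -- rewrite the LHS as A_j ⬝ d
  have hL : (((A * A).mulVec θ₁) j - b j) / lam' - (((A * A).mulVec θ₂) j - b j) / lam''
      = ∑ k, A j k * d k := by
    have h1 : ((A * A).mulVec θ₁) j - b j = ∑ k, A j k * e1 k := by
      rw [← Matrix.mulVec_mulVec, ← hAu, he1]
      simp only [Matrix.mulVec, dotProduct, Pi.sub_apply, Finset.mul_sum,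
        ← Finset.sum_sub_distrib]
      exact Finset.sum_congr rfl fun k _ => by rw [mul_sub, Finset.mul_sum]
    have h2 : ((A * A).mulVec θ₂) j - b j = ∑ k, A j k * e2 k := by
      rw [← Matrix.mulVec_mulVec, ← hAu, he2]
      simp only [Matrix.mulVec, dotProduct, Pi.sub_apply, Finset.mul_sum,
        ← Finset.sum_sub_distrib]
      exact Finset.sum_congr rfl fun k _ => by rw [mul_sub, Finset.mul_sum]
    rw [h1, h2, Finset.sum_div, Finset.sum_div, ← Finset.sum_sub_distrib]
    exact Finset.sum_congr rfl fun k _ => by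
      simp only [hd_def, Pi.sub_apply, Pi.smul_apply, smul_eq_mul]
      field_simp
  rw [hL]
  -- Cauchy-Schwarz for the j-th row
  have hcs1 : |∑ k, A j k * d k|
      ≤ Real.sqrt (∑ k, A j k ^ 2) * Real.sqrt (∑ k, d k ^ 2) := by
    have h := Finset.sum_mul_sq_le_sq_mul_sq Finset.univ (fun k => A j k) d
    have habs : |∑ k, A j k * d k| = Real.sqrt ((∑ k, A j k * d k) ^ 2) :=
      (Real.sqrt_sq_eq_abs _).symm
    rw [habs, ← Real.sqrt_mul (Finset.sum_nonneg fun i _ => sq_nonneg _)]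
    exact Real.sqrt_le_sqrt h
  calc |∑ k, A j k * d k| ≤ Real.sqrt (∑ k, A j k ^ 2) * Real.sqrt (∑ k, d k ^ 2) := hcs1
    _ ≤ Real.sqrt (∑ k, A j k ^ 2) * (|1 / lam' - 1 / lam''| * Real.sqrt (∑ k, u k ^ 2)) := by
        apply mul_le_mul_of_nonneg_left _ (Real.sqrt_nonneg _)
        rw [hsum_d]
        exact hnorm
    _ = Real.sqrt (∑ k, A j k ^ 2) * Real.sqrt (∑ k, u k ^ 2) * |1 / lam' - 1 / lam''| := by
        ring
end

section
/- Let Ĉov be symmetric positive definite, b̂ ∈ ℝ^{n-1}, λ_max = 2‖b̂‖_∞ > 0, A the symmetric positive definite square root of Ĉov, and 0 < λ < λ_max. Let θ̂*(λ) minimize θ̂ᵀ Ĉov θ̂ - 2b̂ᵀθ̂ + λ‖θ̂‖₁. If |b̂_j|/‖b̂‖_∞ < 1 - 2‖A_j‖₂‖A⁻¹b̂‖₂·|1/λ - 1/(2‖b̂‖_∞)|, then θ̂*(λ)_j = 0. -/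
open Matrix Finset

set_option maxHeartbeats 1600000

/-- Sparsity screening rule (Theorem 3 of the paper). With
`λ_max = 2‖b̂‖_∞ > 0`, `A` the symmetric positive definite square root of `Ĉov`,
`0 < λ < λ_max`, and `θ̂*(λ)` the Lasso minimizer, if
`|b̂_j|/‖b̂‖_∞ < 1 - 2‖A_j‖₂‖A⁻¹b̂‖₂ |1/λ - 1/(2‖b̂‖_∞)|` then `θ̂*(λ)_j = 0`.
(The norm `‖b‖` on `Fin m → ℝ` is the sup norm.) -/
theorem stmt_11 {m : ℕ} (A Cov : Matrix (Fin m) (Fin m) ℝ)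
    (hA : A.PosDef) (hACov : Cov = A * A) (hCov : Cov.PosDef)
    (b : Fin m → ℝ) (hb : 0 < 2 * ‖b‖)
    (lam : ℝ) (hlam : 0 < lam) (hlam' : lam < 2 * ‖b‖)
    (θstar : Fin m → ℝ)
    (hmin : ∀ θ : Fin m → ℝ,
      θstar ⬝ᵥ Cov.mulVec θstar - 2 * (b ⬝ᵥ θstar) + lam * ∑ j, |θstar j| ≤
        θ ⬝ᵥ Cov.mulVec θ - 2 * (b ⬝ᵥ θ) + lam * ∑ j, |θ j|)
    (j : Fin m)
    (hscreen : |b j| / ‖b‖ <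
      1 - 2 * Real.sqrt (∑ k, (A j k) ^ 2) * Real.sqrt (∑ k, (A⁻¹.mulVec b k) ^ 2) *
        |1 / lam - 1 / (2 * ‖b‖)|) :
    θstar j = 0 := by
  have nb_pos : (0:ℝ) < ‖b‖ := by linarith
  set nb : ℝ := ‖b‖ with hnbdef
  -- symmetry of A
  have hAsymm : ∀ i k, A i k = A k i := by
    intro i k
    have h := hA.1
    rw [Matrix.IsHermitian] at h
    conv_lhs => rw [← h]
    simp [Matrix.conjTranspose_apply]
  -- symmetric dot product identity
  have hsym_dot : ∀ x y : Fin m → ℝ, x ⬝ᵥ A.mulVec y = (A.mulVec x) ⬝ᵥ y := by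
    intro x y
    simp only [dotProduct, Matrix.mulVec, Finset.mul_sum, Finset.sum_mul]
    rw [Finset.sum_comm]
    refine Finset.sum_congr rfl fun k _ => Finset.sum_congr rfl fun i _ => ?_
    rw [hAsymm k i]; ring
  have hdet : IsUnit A.det := (ne_of_gt hA.det_pos).isUnit
  set c : Fin m → ℝ := A⁻¹.mulVec b with hcdef
  have hAc : A.mulVec c = b := by
    rw [hcdef, Matrix.mulVec_mulVec, Matrix.mul_nonsing_inv A hdet, Matrix.one_mulVec]
  set v : Fin m → ℝ := A.mulVec θstar with hvdef
  have hCovmul : Cov.mulVec θstar = A.mulVec v := by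
    rw [hACov, hvdef, Matrix.mulVec_mulVec]
  -- quadratic form
  set Q : ℝ := ∑ k, (v k)^2 with hQdef
  have hQform : θstar ⬝ᵥ Cov.mulVec θstar = Q := by
    rw [hCovmul, hsym_dot, ← hvdef]
    simp [dotProduct, hQdef, sq]
  set B : ℝ := b ⬝ᵥ θstar with hBdef
  have hBc : B = ∑ k, c k * v k := by
    rw [hBdef, ← hAc, ← hsym_dot]
    simp [dotProduct, hvdef]
  set L : ℝ := ∑ k, |θstar k| with hLdef
  have hQnn : 0 ≤ Q := Finset.sum_nonneg fun k _ => sq_nonneg _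
  have hLnn : 0 ≤ L := Finset.sum_nonneg fun k _ => abs_nonneg _
  -- Step 1 : the scaling identity 2Q - 2B + lam*L = 0
  have hscale : ∀ t : ℝ, 0 ≤ t →
      Q - 2*B + lam*L ≤ t^2*Q - 2*(t*B) + lam*(t*L) := by
    intro t ht
    have h := hmin (t • θstar)
    rw [hQform] at h
    have e1 : (t • θstar) ⬝ᵥ Cov.mulVec (t • θstar) = t^2*Q := by
      rw [Matrix.mulVec_smul, dotProduct_smul, smul_dotProduct, hQform]
      simp [smul_eq_mul]; ring
    have e2 : b ⬝ᵥ (t • θstar) = t*B := by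
      rw [dotProduct_smul, hBdef]; simp [smul_eq_mul]
    have e3 : (∑ k, |(t • θstar) k|) = t*L := by
      rw [hLdef, Finset.mul_sum]
      refine Finset.sum_congr rfl fun k _ => ?_
      simp [abs_mul, abs_of_nonneg ht]
    rw [e1, e2, e3] at h
    linarith
  have hD : 2*Q - 2*B + lam*L = 0 := by
    have key : ∀ ε : ℝ, 0 < ε → ε ≤ 1 → |2*Q - 2*B + lam*L| ≤ ε * Q := by
      intro ε hε hε1
      have h1 := hscale (1+ε) (by linarith)
      have h2 := hscale (1-ε) (by linarith)
      have h1' : 0 ≤ ε * (2*Q - 2*B + lam*L + ε*Q) := by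
        have e : ε * (2*Q - 2*B + lam*L + ε*Q)
            = ((1+ε)^2*Q - 2*((1+ε)*B) + lam*((1+ε)*L)) - (Q - 2*B + lam*L) := by ring
        rw [e]; linarith
      have h2' : 0 ≤ ε * (ε*Q - (2*Q - 2*B + lam*L)) := by
        have e : ε * (ε*Q - (2*Q - 2*B + lam*L))
            = ((1-ε)^2*Q - 2*((1-ε)*B) + lam*((1-ε)*L)) - (Q - 2*B + lam*L) := by ring
        rw [e]; linarith
      have h1'' : 0 ≤ 2*Q - 2*B + lam*L + ε*Q := nonneg_of_mul_nonneg_right h1' hε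
      have h2'' : 0 ≤ ε*Q - (2*Q - 2*B + lam*L) := nonneg_of_mul_nonneg_right h2' hε
      rw [abs_le]
      constructor <;> linarith
    by_contra hne
    have habs : 0 < |2*Q - 2*B + lam*L| := abs_pos.2 hne
    set D := |2*Q - 2*B + lam*L| with hDdef
    have hq1 : 0 < Q + 1 := by linarith
    have hε : 0 < min 1 (D/(2*(Q+1))) := lt_min one_pos (by positivity)
    have h := key _ hε (min_le_left _ _)
    have h2 : min 1 (D/(2*(Q+1))) * Q ≤ (D/(2*(Q+1))) * Q := by
      apply mul_le_mul_of_nonneg_right (min_le_right _ _) hQnn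
    have h3 : (D/(2*(Q+1))) * Q < D := by
      rw [div_mul_eq_mul_div, div_lt_iff₀ (by positivity)]
      exact mul_lt_mul_of_pos_left (by linarith) habs
    linarith
  -- Hölder : B ≤ nb * L
  have hBL : B ≤ nb * L := by
    rw [hBdef, hLdef, dotProduct, Finset.mul_sum]
    refine Finset.sum_le_sum fun k _ => ?_
    have h1 : b k * θstar k ≤ |b k| * |θstar k| := by
      calc b k * θstar k ≤ |b k * θstar k| := le_abs_self _
        _ = |b k| * |θstar k| := abs_mul _ _
    have h2 : |b k| ≤ nb := by
      have := norm_le_pi_norm b k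
      simpa [Real.norm_eq_abs] using this
    calc b k * θstar k ≤ |b k| * |θstar k| := h1
      _ ≤ nb * |θstar k| := mul_le_mul_of_nonneg_right h2 (abs_nonneg _)
  set r : ℝ := lam / (2*nb) with hrdef
  have hr0 : 0 < r := by positivity
  have hr1 : r < 1 := by rw [hrdef, div_lt_one (by linarith)]; linarith
  have hrnb : r * nb = lam/2 := by rw [hrdef]; field_simp
  have hQle : Q ≤ (1-r)*B := by
    have h1 : r*B ≤ r*(nb*L) := by
      apply mul_le_mul_of_nonneg_left hBL (le_of_lt hr0)
    have h2 : r*(nb*L) = (lam/2)*L := by rw [← hrnb]; ring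
    have h3 : (1-r)*B = B - r*B := by ring
    linarith
  have hBnn : 0 ≤ B := by
    have : 0 ≤ lam*L := mul_nonneg (le_of_lt hlam) hLnn
    linarith
  -- the shifted residual w
  set w : Fin m → ℝ := fun k => (1-r)*c k - v k with hwdef
  have hw2 : ∑ k, (w k)^2 = (1-r)^2 * (∑ k, (c k)^2) - 2*(1-r)*B + Q := by
    rw [hBc, hQdef, Finset.mul_sum, Finset.mul_sum]
    rw [← Finset.sum_sub_distrib, ← Finset.sum_add_distrib]
    refine Finset.sum_congr rfl fun k _ => ?_
    rw [hwdef]; ring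
  have hw2le : ∑ k, (w k)^2 ≤ (1-r)^2 * (∑ k, (c k)^2) := by
    have h1 : Q - 2*((1-r)*B) ≤ -Q := by linarith [hQle]
    rw [hw2]
    have h2 : (1-r)^2 * (∑ k, (c k)^2) - 2*(1-r)*B + Q
        = (1-r)^2 * (∑ k, (c k)^2) + (Q - 2*((1-r)*B)) := by ring
    rw [h2]
    linarith [hQnn]
  -- norms
  set NA : ℝ := Real.sqrt (∑ k, (A j k) ^ 2) with hNAdef
  set Nc : ℝ := Real.sqrt (∑ k, (c k) ^ 2) with hNcdef
  have hNAnn : 0 ≤ NA := Real.sqrt_nonneg _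
  have hNcnn : 0 ≤ Nc := Real.sqrt_nonneg _
  have hNA2 : NA^2 = ∑ k, (A j k)^2 := Real.sq_sqrt (Finset.sum_nonneg fun k _ => sq_nonneg _)
  have hNc2 : Nc^2 = ∑ k, (c k)^2 := Real.sq_sqrt (Finset.sum_nonneg fun k _ => sq_nonneg _)
  -- Cauchy-Schwarz bound on S = ∑ A j k * w k
  set S : ℝ := ∑ k, A j k * w k with hSdef
  have hScs : |S| ≤ NA * ((1-r) * Nc) := by
    have h1 : S^2 ≤ (∑ k, (A j k)^2) * (∑ k, (w k)^2) :=
      Finset.sum_mul_sq_le_sq_mul_sq _ _ _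
    have h2 : S^2 ≤ (NA * ((1-r)*Nc))^2 := by
      have hsum : (0:ℝ) ≤ ∑ k, (A j k)^2 := Finset.sum_nonneg fun k _ => sq_nonneg _
      have e : (NA * ((1-r)*Nc))^2 = NA^2 * ((1-r)^2 * Nc^2) := by ring
      rw [e, hNA2, hNc2]
      calc S^2 ≤ (∑ k, (A j k)^2) * (∑ k, (w k)^2) := h1
        _ ≤ (∑ k, (A j k)^2) * ((1-r)^2 * (∑ k, (c k)^2)) :=
            mul_le_mul_of_nonneg_left hw2le hsum
    have h3 := Real.sqrt_le_sqrt h2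
    rwa [Real.sqrt_sq_eq_abs, Real.sqrt_sq (mul_nonneg hNAnn (mul_nonneg (by linarith) hNcnn))] at h3
  -- decomposition of the gradient coordinate
  set g : ℝ := Cov.mulVec θstar j - b j with hgdef
  have hCovj : Cov.mulVec θstar j = ∑ k, A j k * v k := by
    rw [hCovmul]; simp [Matrix.mulVec, dotProduct]
  have hbj : b j = ∑ k, A j k * c k := by
    rw [← hAc]; simp [Matrix.mulVec, dotProduct]
  have hgdecomp : -g = r * b j + S := by
    have hSval : S = (1-r) * (∑ k, A j k * c k) - (∑ k, A j k * v k) := by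
      rw [hSdef, Finset.mul_sum, ← Finset.sum_sub_distrib]
      refine Finset.sum_congr rfl fun k _ => ?_
      rw [hwdef]; ring
    rw [hgdef, hSval, hCovj]
    rw [hbj]; ring
  -- the screening bound gives |g| < lam/2
  have heabs : |1/lam - 1/(2*nb)| = 1/lam - 1/(2*nb) := by
    rw [abs_of_pos]
    rw [sub_pos]
    exact one_div_lt_one_div_of_lt hlam hlam'
  set e : ℝ := 1/lam - 1/(2*nb) with hedef
  have hle : lam * e = 1 - r := by rw [hedef, hrdef]; field_simp
  have hscreen' : |b j| < nb * (1 - 2*NA*Nc*e) := by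
    have h := (div_lt_iff₀ nb_pos).1 hscreen
    calc |b j| < (1 - 2*NA*Nc*|e|) * nb := h
      _ = nb * (1 - 2*NA*Nc*e) := by rw [heabs]; ring
  have hrb : r * |b j| < lam/2 - NA*Nc*(1-r) := by
    have h1 : r * |b j| < r * (nb * (1 - 2*NA*Nc*e)) := by
      exact mul_lt_mul_of_pos_left hscreen' hr0
    have h2 : r * (nb * (1 - 2*NA*Nc*e)) = lam/2 - NA*Nc*(1-r) := by
      linear_combination (1 - 2*NA*Nc*e)*hrnb - NA*Nc*hle
    exact lt_of_lt_of_eq h1 h2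
  have hgabs : |g| < lam/2 := by
    have h1 : |g| = |r * b j + S| := by rw [← abs_neg g, hgdecomp]
    have h2 : |r * b j + S| ≤ r * |b j| + |S| := by
      calc |r * b j + S| ≤ |r * b j| + |S| := abs_add_le _ _
        _ = r * |b j| + |S| := by rw [abs_mul, abs_of_pos hr0]
    have h3 : NA * ((1-r)*Nc) = NA*Nc*(1-r) := by ring
    rw [h1]
    calc |r * b j + S| ≤ r * |b j| + |S| := h2
      _ < lam/2 - NA*Nc*(1-r) + NA*((1-r)*Nc) := by linarith
      _ = lam/2 := by ring
  -- coordinate perturbation inequality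
  have hCovsymm : ∀ i k, Cov i k = Cov k i := by
    intro i k
    have h := hCov.1
    rw [Matrix.IsHermitian] at h
    conv_lhs => rw [← h]
    simp [Matrix.conjTranspose_apply]
  have hpert : ∀ t : ℝ,
      0 ≤ 2*t*(Cov.mulVec θstar j) + t^2 * Cov j j - 2*(t*(b j)) + lam*(|θstar j + t| - |θstar j|) := by
    intro t
    set θt : Fin m → ℝ := θstar + Pi.single j t with hθt
    have h := hmin θt
    have e1 : θt ⬝ᵥ Cov.mulVec θt
        = θstar ⬝ᵥ Cov.mulVec θstar + 2*t*(Cov.mulVec θstar j) + t^2 * Cov j j := by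
      rw [hθt, Matrix.mulVec_add, dotProduct_add, add_dotProduct, add_dotProduct]
      rw [show Cov.mulVec (Pi.single j t) = (fun i => Cov i j * t) from by
        funext i; simp [Matrix.mulVec, dotProduct, Pi.single_apply]]
      have c1 : θstar ⬝ᵥ (fun i => Cov i j * t) = t * (Cov.mulVec θstar j) := by
        simp only [dotProduct, Matrix.mulVec, Finset.mul_sum]
        refine Finset.sum_congr rfl fun k _ => ?_
        rw [hCovsymm k j]; ring
      have c2 : (Pi.single j t : Fin m → ℝ) ⬝ᵥ Cov.mulVec θstar = t * (Cov.mulVec θstar j) := by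
        rw [single_dotProduct]
      have c3 : (Pi.single j t : Fin m → ℝ) ⬝ᵥ (fun i => Cov i j * t) = t^2 * Cov j j := by
        rw [single_dotProduct]; ring
      rw [c1, c2, c3]; ring
    have e2 : b ⬝ᵥ θt = b ⬝ᵥ θstar + t * b j := by
      rw [hθt, dotProduct_add, dotProduct_single]; ring
    have e3 : (∑ k, |θt k|) = (∑ k, |θstar k|) + (|θstar j + t| - |θstar j|) := by
      rw [← Finset.add_sum_erase Finset.univ (fun k : Fin m => |θt k|) (Finset.mem_univ j)]
      rw [← Finset.add_sum_erase Finset.univ (fun k => |θstar k|) (Finset.mem_univ j)]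
      have c4 : ∑ k ∈ Finset.univ.erase j, |θt k|
          = ∑ k ∈ Finset.univ.erase j, |θstar k| := by
        refine Finset.sum_congr rfl fun k hk => ?_
        have hkj : k ≠ j := Finset.ne_of_mem_erase hk
        simp [hθt, Pi.single_eq_of_ne hkj]
      rw [c4]
      simp [hθt, Pi.single_eq_same]
      ring
    rw [e1, e2, e3] at h
    linarith
  -- positivity of the diagonal
  have hCjj : 0 < Cov j j := by
    have h1 : (Pi.single j 1 : Fin m → ℝ) ≠ 0 := by
      intro h; simpa using congrFun h j
    have := hCov.dotProduct_mulVec_pos h1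
    simpa [dotProduct, Matrix.mulVec, Pi.single_apply, Finset.sum_ite_eq, Finset.sum_ite_eq'] using this
  -- conclude
  by_contra hne
  have hglt := abs_lt.1 hgabs
  rcases lt_or_gt_of_ne hne with hneg | hpos
  · -- θstar j < 0 : take t = ε > 0
    set K : ℝ := lam - 2*g with hKdef
    have hK : 0 < K := by rw [hKdef, hgdef]; rw [hgdef] at hglt; linarith [hglt.2]
    set ε : ℝ := min (-θstar j) (K/(2*Cov j j)) with hεdef
    have hε0 : 0 < ε := lt_min (by linarith) (by positivity)
    have hεa : ε ≤ -θstar j := min_le_left _ _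
    have h := hpert ε
    have habs1 : |θstar j + ε| = |θstar j| - ε := by
      rw [abs_of_nonpos (by linarith), abs_of_neg hneg]; ring
    rw [habs1] at h
    have h2 : lam - 2*(Cov.mulVec θstar j - b j) ≤ ε * Cov j j := by
      have hm : 0 ≤ ε * (2*(Cov.mulVec θstar j - b j) + ε*Cov j j - lam) := by
        have e : ε * (2*(Cov.mulVec θstar j - b j) + ε*Cov j j - lam)
            = 2*ε*(Cov.mulVec θstar j) + ε^2 * Cov j j - 2*(ε*(b j))
              + lam*((|θstar j| - ε) - |θstar j|) := by ring
        rw [e]; linarith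
      have := nonneg_of_mul_nonneg_right hm hε0
      linarith
    have h3 : ε * Cov j j ≤ (K/(2*Cov j j)) * Cov j j :=
      mul_le_mul_of_nonneg_right (min_le_right _ _) (le_of_lt hCjj)
    have h4 : (K/(2*Cov j j)) * Cov j j = K/2 := by field_simp
    rw [hgdef] at hKdef
    linarith
  · -- θstar j > 0 : take t = -ε
    set K : ℝ := lam + 2*g with hKdef
    have hK : 0 < K := by rw [hKdef, hgdef]; rw [hgdef] at hglt; linarith [hglt.1]
    set ε : ℝ := min (θstar j) (K/(2*Cov j j)) with hεdef
    have hε0 : 0 < ε := lt_min hpos (by positivity)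
    have hεa : ε ≤ θstar j := min_le_left _ _
    have h := hpert (-ε)
    have habs1 : |θstar j + -ε| = |θstar j| - ε := by
      rw [abs_of_nonneg (by linarith), abs_of_pos hpos]; ring
    rw [habs1] at h
    have h2 : lam + 2*(Cov.mulVec θstar j - b j) ≤ ε * Cov j j := by
      have hm : 0 ≤ ε * (ε*Cov j j - 2*(Cov.mulVec θstar j - b j) - lam) := by
        have e : ε * (ε*Cov j j - 2*(Cov.mulVec θstar j - b j) - lam)
            = 2*(-ε)*(Cov.mulVec θstar j) + (-ε)^2 * Cov j j - 2*((-ε)*(b j))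
              + lam*((|θstar j| - ε) - |θstar j|) := by ring
        rw [e]; linarith
      have := nonneg_of_mul_nonneg_right hm hε0
      linarith
    have h3 : ε * Cov j j ≤ (K/(2*Cov j j)) * Cov j j :=
      mul_le_mul_of_nonneg_right (min_le_right _ _) (le_of_lt hCjj)
    have h4 : (K/(2*Cov j j)) * Cov j j = K/2 := by field_simp
    rw [hgdef] at hKdef
    linarith
end

section
/- Let Cov be symmetric positive definite, fix i, and for λ ≥ 0 let θ*(λ) minimize θᵀ Cov θ + λΣ_{j≠i}|θ_j| over {θ_i = -1}. Then inf over λ ≥ 0 of θ*(λ)ᵀ Cov θ*(λ) / Cov_{ii} equals det(Cov) / (Cov_{ii} · det(Cov_{[n]∖i}^{[n]∖i})). -/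
open Matrix Finset

/-- The infimum over `λ ≥ 0` of the relative error
`θ*(λ)ᵀ Cov θ*(λ) / Cov_{ii}` equals
`det Cov / (Cov_{ii} · det(Cov with row/column i removed))`, where `θ*(λ)` minimizes
`θᵀ Cov θ + λ ∑_{j≠i} |θ_j|` over `{θ : θ i = -1}`. -/
theorem stmt_15 {n : ℕ} (Cov : Matrix (Fin (n + 1)) (Fin (n + 1)) ℝ) (hCov : Cov.PosDef)
    (i : Fin (n + 1)) (θstar : ℝ → Fin (n + 1) → ℝ)
    (hθi : ∀ lam : ℝ, 0 ≤ lam → θstar lam i = -1)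
    (hmin : ∀ lam : ℝ, 0 ≤ lam → ∀ θ : Fin (n + 1) → ℝ, θ i = -1 →
      θstar lam ⬝ᵥ Cov.mulVec (θstar lam) + lam * ∑ j ∈ Finset.univ.erase i, |θstar lam j| ≤
        θ ⬝ᵥ Cov.mulVec θ + lam * ∑ j ∈ Finset.univ.erase i, |θ j|) :
    IsGLB {v : ℝ | ∃ lam : ℝ, 0 ≤ lam ∧
        v = (θstar lam ⬝ᵥ Cov.mulVec (θstar lam)) / Cov i i}
      (Cov.det / (Cov i i * (Cov.submatrix i.succAbove i.succAbove).det)) := by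
  have hdet : 0 < Cov.det := hCov.det_pos
  have hInv : (Cov⁻¹).PosDef := hCov.inv
  set e : Fin (n + 1) → ℝ := Pi.single i 1 with he
  have hene : e ≠ 0 := by
    intro h
    have := congrFun h i
    simp [he] at this
  set α : ℝ := Cov⁻¹ i i with hα
  have hαpos : 0 < α := by
    have := hInv.dotProduct_mulVec_pos hene
    simpa [he] using this
  have hCii : 0 < Cov i i := by
    have := hCov.dotProduct_mulVec_pos hene
    simpa [he] using this
  -- symmetric
  have hsym : Covᵀ = Cov := by
    ext a b
    simpa using hCov.isHermitian.apply a b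
  -- adjugate diagonal = minor det
  have hadj : Cov.adjugate i i = (Cov.submatrix i.succAbove i.succAbove).det := by
    rw [Matrix.adjugate_apply, Matrix.det_succ_row _ i]
    rw [Finset.sum_eq_single i]
    · have hsub : (Cov.updateRow i (Pi.single i 1)).submatrix i.succAbove i.succAbove
        = Cov.submatrix i.succAbove i.succAbove := by
        ext a b
        simp [Matrix.updateRow_ne (Fin.succAbove_ne i a)]
      rw [hsub]
      simp [Even.neg_one_pow ⟨(i : ℕ), rfl⟩]
    · intro j _ hj
      simp [Pi.single_apply, hj.symm]
    · simp
  have hαval : α = (Cov.submatrix i.succAbove i.succAbove).det / Cov.det := by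
    rw [hα, Matrix.inv_def]
    simp [hadj, Ring.inverse_eq_inv', div_eq_inv_mul]
  set dm : ℝ := (Cov.submatrix i.succAbove i.succAbove).det with hdm
  have hdmpos : 0 < dm := by
    have : α * Cov.det = dm := by
      rw [hαval]; field_simp
    nlinarith
  have hαinv : α⁻¹ = Cov.det / dm := by
    rw [hαval, inv_div]
  -- the minimizer of the pure quadratic
  set θ₀ : Fin (n + 1) → ℝ := (-α⁻¹) • (Cov⁻¹ *ᵥ e) with hθ₀
  have hmv : Cov *ᵥ θ₀ = (-α⁻¹) • e := by
    rw [hθ₀, Matrix.mulVec_smul, Matrix.mulVec_mulVec,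
      Matrix.mul_nonsing_inv _ (isUnit_iff_ne_zero.mpr hdet.ne'), Matrix.one_mulVec]
  have hθ₀i : θ₀ i = -1 := by
    rw [hθ₀]
    simp [he, hα, neg_mul, inv_mul_cancel₀ (by rw [← hα]; exact hαpos.ne' : Cov⁻¹ i i ≠ 0)]
  -- key lower bound
  have key : ∀ θ : Fin (n + 1) → ℝ, θ i = -1 → α⁻¹ ≤ θ ⬝ᵥ Cov *ᵥ θ := by
    intro θ hθ
    set d : Fin (n + 1) → ℝ := θ - θ₀ with hd
    have hθeq : θ = d + θ₀ := by funext j; simp [hd]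
    have hdi : d i = 0 := by simp [hd, hθ, hθ₀i]
    have hdA0 : d ⬝ᵥ Cov *ᵥ θ₀ = 0 := by
      rw [hmv, dotProduct_smul]
      simp [he, hdi]
    have hθ0A : θ₀ ⬝ᵥ Cov *ᵥ θ₀ = α⁻¹ := by
      rw [hmv, dotProduct_smul]
      simp [he, hθ₀i]
    have hθ0Ad : θ₀ ⬝ᵥ Cov *ᵥ d = 0 := by
      rw [Matrix.dotProduct_mulVec, ← Matrix.mulVec_transpose, hsym, hmv]
      simp [he, hdi]
    have hd2 : 0 ≤ d ⬝ᵥ Cov *ᵥ d := by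
      rcases eq_or_ne d 0 with h | h
      · simp [h]
      · have := hCov.dotProduct_mulVec_pos h
        simp only [star_trivial] at this
        exact this.le
    have hexp : θ ⬝ᵥ Cov *ᵥ θ = d ⬝ᵥ Cov *ᵥ d + α⁻¹ := by
      rw [hθeq, Matrix.mulVec_add, add_dotProduct, dotProduct_add,
        dotProduct_add, hdA0, hθ0Ad, hθ0A]
      ring
    linarith
  have hval0 : θstar 0 ⬝ᵥ Cov *ᵥ θstar 0 = α⁻¹ := by
    have h1 := hmin 0 le_rfl θ₀ hθ₀i
    simp only [zero_mul, add_zero] at h1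
    have h2 := key (θstar 0) (hθi 0 le_rfl)
    have h3 : θ₀ ⬝ᵥ Cov *ᵥ θ₀ = α⁻¹ := by
      rw [hmv, dotProduct_smul]
      simp [he, hθ₀i]
    linarith [h1, h2, h3.le, h3.ge]
  have hm : Cov.det / (Cov i i * dm) = α⁻¹ / Cov i i := by
    rw [hαinv, div_div, mul_comm]
  constructor
  · rintro v ⟨lam, hlam, rfl⟩
    rw [hm]
    have := key (θstar lam) (hθi lam hlam)
    gcongr
  · intro b hb
    refine hb ⟨0, le_rfl, ?_⟩
    rw [hval0, hm]
end
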